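/- The function f : (0,1) → ℝ defined by f(β) = ((1−β²)/(2β))·log((1+β)/(1−β)) is strictly decreasing on (0,1); moreover f(β) tends to 1 as β → 0⁺ and f(β) tends to 0 as β → 1⁻. -/

import Mathlib

open Filter Set

section FAux
open Real

noncomputable def F : ℝ → ℝ := fun β => ((1 - β^2) / (2*β)) * Real.log ((1 + β) / (1 - β))

-- key inequality: log((1+β)/(1-β)) > 2β for β ∈ (0,1)
lemma log_gt (β : ℝ) (hβ : β ∈ Set.Ioo (0:ℝ) 1) :
    2*β < Real.log ((1 + β) / (1 - β)) := by
  obtain ⟨h0, h1⟩ := hβ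
  set h : ℝ → ℝ := fun t => Real.log (1 + t) - Real.log (1 - t) - 2*t with hh
  have key : StrictMonoOn h (Set.Ico 0 1) := by
    apply strictMonoOn_of_deriv_pos (convex_Ico 0 1)
    · apply ContinuousOn.sub (ContinuousOn.sub ?_ ?_) (by fun_prop)
      · apply ContinuousOn.log (by fun_prop)
        intro x hx; nlinarith [hx.1]
      · apply ContinuousOn.log (by fun_prop)
        intro x hx; nlinarith [hx.2]
    · intro x hx
      rw [interior_Ico] at hx
      obtain ⟨hx0, hx1⟩ := hx
      have hd : HasDerivAt h (1/(1+x) - (-1)/(1-x) - 2) x := by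
        have d1 : HasDerivAt (fun t : ℝ => Real.log (1 + t)) (1/(1+x)) x := by
          have := ((hasDerivAt_id x).const_add 1).log (ne_of_gt (by simp only [id_eq]; linarith))
          simpa using this
        have d2 : HasDerivAt (fun t : ℝ => Real.log (1 - t)) ((-1)/(1-x)) x := by
          have := ((hasDerivAt_id x).const_sub 1).log (ne_of_gt (by simp only [id_eq]; linarith))
          simpa using this
        exact ((d1.sub d2).sub ((hasDerivAt_id x).const_mul 2)).congr_deriv (by ring)
      rw [hd.deriv]
      have : (0:ℝ) < 1 + x := by linarith
      have : (0:ℝ) < 1 - x := by linarith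
      rw [div_sub_div _ _ (by positivity) (by positivity)]
      have hnum : (0:ℝ) < 2*x^2 := by positivity
      have heq : 1*(1-x) - (1+x)*(-1) = 2 := by ring
      rw [heq]
      have h2 : 2/((1+x)*(1-x)) - 2 = (2*x^2)/((1+x)*(1-x)) := by
        field_simp; ring
      rw [h2]; positivity
  have := key (Set.left_mem_Ico.2 one_pos) (Set.mem_Ico.2 ⟨le_of_lt h0, h1⟩) h0
  simp only [hh] at this
  rw [Real.log_div (by linarith) (by linarith)]
  simp at this; linarith

lemma hasDeriv (β : ℝ) (hβ : β ∈ Set.Ioo (0:ℝ) 1) :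
    HasDerivAt F (-(1+β^2)/(2*β^2) * Real.log ((1+β)/(1-β)) + 1/β) β := by
  obtain ⟨h0, h1⟩ := hβ
  have hb2 : (2:ℝ)*β ≠ 0 := by positivity
  have hp : (0:ℝ) < 1 + β := by linarith
  have hm : (0:ℝ) < 1 - β := by linarith
  have d1 : HasDerivAt (fun t : ℝ => (1 - t^2)/(2*t)) (-(1+β^2)/(2*β^2)) β := by
    have dn : HasDerivAt (fun t : ℝ => 1 - t^2) (-(2*β)) β := by
      simpa using ((hasDerivAt_pow 2 β).const_sub 1)
    have dd : HasDerivAt (fun t : ℝ => 2*t) 2 β := by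
      simpa using (hasDerivAt_id β).const_mul 2
    have := dn.div dd hb2
    refine this.congr_deriv ?_
    field_simp; ring
  have d2 : HasDerivAt (fun t : ℝ => Real.log ((1+t)/(1-t))) (2/(1-β^2)) β := by
    have du : HasDerivAt (fun t : ℝ => (1+t)/(1-t)) (2/(1-β)^2) β := by
      have dn : HasDerivAt (fun t : ℝ => 1+t) 1 β := by simpa using (hasDerivAt_id β).const_add 1
      have dd : HasDerivAt (fun t : ℝ => 1-t) (-1) β := by simpa using (hasDerivAt_id β).const_sub 1
      have := dn.div dd (by linarith)
      refine this.congr_deriv ?_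
      field_simp; ring
    have := du.log (by positivity)
    convert this using 1
    have hne : (1:ℝ)-β ≠ 0 := hm.ne'
    have hpe : (1:ℝ)+β ≠ 0 := hp.ne'
    rw [div_div_div_comm, div_div_eq_mul_div, div_mul_eq_mul_div]
    rw [div_eq_div_iff (by nlinarith) (by positivity)]
    field_simp
    ring
  have := d1.mul d2
  refine this.congr_deriv ?_
  have h2 : (1 - β^2)/(2*β) * (2/(1-β^2)) = 1/β := by
    have : (1:ℝ) - β^2 ≠ 0 := by nlinarith
    field_simp
  rw [h2]

lemma dlog (β : ℝ) (hm1 : -1 < β) (h1 : β < 1) :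
    HasDerivAt (fun t : ℝ => Real.log ((1+t)/(1-t))) (2/(1-β^2)) β := by
  have hp : (0:ℝ) < 1 + β := by linarith
  have hm : (0:ℝ) < 1 - β := by linarith
  have du : HasDerivAt (fun t : ℝ => (1+t)/(1-t)) (2/(1-β)^2) β := by
    have dn : HasDerivAt (fun t : ℝ => 1+t) 1 β := by simpa using (hasDerivAt_id β).const_add 1
    have dd : HasDerivAt (fun t : ℝ => 1-t) (-1) β := by simpa using (hasDerivAt_id β).const_sub 1
    have := dn.div dd (by linarith)
    refine this.congr_deriv ?_
    field_simp; ring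
  have := du.log (by positivity)
  convert this using 1
  have hne : (1:ℝ)-β ≠ 0 := hm.ne'
  have hpe : (1:ℝ)+β ≠ 0 := hp.ne'
  rw [div_div_div_comm, div_div_eq_mul_div, div_mul_eq_mul_div]
  rw [div_eq_div_iff (by nlinarith) (by positivity)]
  field_simp
  ring

lemma anti : StrictAntiOn F (Set.Ioo 0 1) := by
  apply strictAntiOn_of_deriv_neg (convex_Ioo (0:ℝ) 1)
  · intro x hx; exact (hasDeriv x hx).continuousAt.continuousWithinAt
  · intro x hx
    rw [interior_Ioo] at hx
    rw [(hasDeriv x hx).deriv]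
    obtain ⟨h0, h1⟩ := hx
    have hL := log_gt x ⟨h0, h1⟩
    have heq : -(1+x^2)/(2*x^2) * Real.log ((1+x)/(1-x)) + 1/x
        = (2*x - (1+x^2)*Real.log ((1+x)/(1-x)))/(2*x^2) := by
      field_simp; ring
    rw [heq]
    apply div_neg_of_neg_of_pos _ (by positivity)
    have hLpos : (0:ℝ) < Real.log ((1+x)/(1-x)) := by linarith
    nlinarith [mul_pos (pow_pos h0 2) hLpos]

lemma lim0 : Tendsto F (nhdsWithin 0 (Set.Ioi 0)) (nhds 1) := by
  have hs : Tendsto (slope (fun t : ℝ => Real.log ((1+t)/(1-t))) 0)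
      (nhdsWithin 0 (Set.Ioi 0)) (nhds 2) := by
    have := hasDerivAt_iff_tendsto_slope.1 (dlog 0 (by norm_num) (by norm_num))
    norm_num at this
    exact this.mono_left (nhdsWithin_mono _ (fun x hx => ne_of_gt hx))
  have h2 : Tendsto (fun β : ℝ => (1-β^2)/2) (nhdsWithin 0 (Set.Ioi 0)) (nhds (1/2)) := by
    have hc : ContinuousAt (fun β : ℝ => (1-β^2)/2) 0 := by fun_prop
    have := hc.tendsto.mono_left (nhdsWithin_le_nhds (s := Set.Ioi (0:ℝ)))
    norm_num at this; exact this
  have := h2.mul hs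
  norm_num at this
  apply this.congr'
  filter_upwards [self_mem_nhdsWithin] with β hβ
  have hβ0 : β ≠ 0 := ne_of_gt hβ
  rw [slope_def_field]
  have : Real.log ((1+(0:ℝ))/(1-0)) = 0 := by norm_num
  rw [this]
  show (1-β^2)/2 * ((Real.log ((1+β)/(1-β)) - 0)/(β - 0)) = F β
  unfold F
  field_simp
  ring

lemma lim1 : Tendsto F (nhdsWithin 1 (Set.Iio 1)) (nhds 0) := by
  have key : Tendsto (fun β : ℝ => (1-β)*Real.log (1-β)) (nhdsWithin 1 (Set.Iio 1)) (nhds 0) := by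
    have h1 : Tendsto (fun β : ℝ => 1-β) (nhdsWithin 1 (Set.Iio 1)) (nhdsWithin 0 (Set.Ioi 0)) := by
      apply tendsto_nhdsWithin_of_tendsto_nhds_of_eventually_within
      · have hcc : ContinuousAt (fun β : ℝ => 1-β) 1 := by fun_prop
        have := hcc.tendsto.mono_left (nhdsWithin_le_nhds (s := Set.Iio (1:ℝ)))
        norm_num at this; exact this
      · filter_upwards [self_mem_nhdsWithin] with β hβ
        simp only [Set.mem_Iio] at hβ
        simp only [Set.mem_Ioi]; linarith
    have h2 : Tendsto (fun x : ℝ => Real.log x * x) (nhdsWithin 0 (Set.Ioi 0)) (nhds 0) := by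
      simpa using tendsto_log_mul_rpow_nhdsGT_zero one_pos
    have := h2.comp h1
    simpa [Function.comp_def, mul_comm] using this
  have keyp : Tendsto (fun β : ℝ => (1-β)*Real.log (1+β)) (nhdsWithin 1 (Set.Iio 1)) (nhds 0) := by
    have hc : ContinuousAt (fun β : ℝ => (1-β)*Real.log (1+β)) 1 := by
      apply ContinuousAt.mul (by fun_prop)
      exact (Real.continuousAt_log (by norm_num)).comp (by fun_prop)
    have := hc.tendsto.mono_left (nhdsWithin_le_nhds (s := Set.Iio (1:ℝ)))
    norm_num at this; exact this
  have hc : Tendsto (fun β : ℝ => (1+β)/(2*β)) (nhdsWithin 1 (Set.Iio 1)) (nhds 1) := by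
    have hc : ContinuousAt (fun β : ℝ => (1+β)/(2*β)) 1 :=
      ContinuousAt.div (by fun_prop) (by fun_prop) (by norm_num)
    have := hc.tendsto.mono_left (nhdsWithin_le_nhds (s := Set.Iio (1:ℝ)))
    norm_num at this; exact this
  have := hc.mul (keyp.sub key)
  norm_num at this
  apply this.congr'
  have hmem : Set.Ioo (0:ℝ) 1 ∈ nhdsWithin 1 (Set.Iio 1) := by
    rw [mem_nhdsWithin]
    exact ⟨Set.Ioi 0, isOpen_Ioi, by norm_num, fun x ⟨hx1, hx2⟩ => ⟨hx1, hx2⟩⟩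
  filter_upwards [hmem] with β hβ
  obtain ⟨h0, h1⟩ := hβ
  show (1+β)/(2*β) * ((1-β)*Real.log (1+β) - (1-β)*Real.log (1-β)) = F β
  unfold F
  rw [Real.log_div (by linarith) (by linarith)]
  field_simp
  ring


end FAux

/-- The function f(β) = ((1−β²)/(2β))·log((1+β)/(1−β)) is strictly decreasing on (0,1),
    tends to 1 as β → 0⁺, and tends to 0 as β → 1⁻. -/
theorem f_strictAnti_and_limits :
    StrictAntiOn (fun β : ℝ => ((1 - β^2) / (2*β)) * Real.log ((1 + β) / (1 - β)))
      (Set.Ioo 0 1) ∧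
    Tendsto (fun β : ℝ => ((1 - β^2) / (2*β)) * Real.log ((1 + β) / (1 - β)))
      (nhdsWithin 0 (Set.Ioi 0)) (nhds 1) ∧
    Tendsto (fun β : ℝ => ((1 - β^2) / (2*β)) * Real.log ((1 + β) / (1 - β)))
      (nhdsWithin 1 (Set.Iio 1)) (nhds 0) := by
  exact ⟨anti, lim0, lim1⟩
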